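/- For every finite simple graph G on vertices {1,…,n} with ordered edge set E, one has f_q(1/2) = f_vect(1/2). -/

import Mathlib

open scoped BigOperators

/-- A correlation with `n` inputs and `2` outputs: `p i j v w` is `p(i,j|v,w)`. -/
abbrev Corr (n : ℕ) := Fin 2 → Fin 2 → Fin n → Fin n → ℝ

/-- Synchronous correlation (for two outputs). -/
def IsSync {n : ℕ} (p : Corr n) : Prop :=
  ∀ v, p 0 1 v v = 0 ∧ p 1 0 v v = 0

/-- Both marginals of outcome `0` are constantly equal to `t`. -/
def HasMarginals {n : ℕ} (p : Corr n) (t : ℝ) : Prop :=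
  (∀ v w, ∑ j, p 0 j v w = t) ∧ (∀ v w, ∑ i, p i 0 v w = t)

/-- The (ordered) edge set of a graph `G` on `Fin n`, as a finset of ordered pairs. -/
def edgeFinset' {n : ℕ} (G : SimpleGraph (Fin n)) [DecidableRel G.Adj] :
    Finset (Fin n × Fin n) :=
  Finset.univ.filter fun vw : Fin n × Fin n => G.Adj vw.1 vw.2

/-- `F(p) = Σ_{(v,w) ∈ E} p(0,0|v,w)`. -/
def Fval {n : ℕ} (G : SimpleGraph (Fin n)) [DecidableRel G.Adj] (p : Corr n) : ℝ :=
  ∑ vw ∈ edgeFinset' G, p 0 0 vw.1 vw.2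

/-- A realization of `p` as a vectorial correlation, in a real Hilbert space. -/
structure VectRealization (n : ℕ) (p : Corr n) where
  H : Type
  [nacg : NormedAddCommGroup H]
  [ips : InnerProductSpace ℝ H]
  x : Fin n → Fin 2 → H
  y : Fin n → Fin 2 → H
  h : H
  hnorm : ‖h‖ = 1
  hxorth : ∀ v, inner ℝ (x v 0) (x v 1) = (0 : ℝ)
  hyorth : ∀ w, inner ℝ (y w 0) (y w 1) = (0 : ℝ)
  hxsum : ∀ v, x v 0 + x v 1 = h
  hysum : ∀ w, y w 0 + y w 1 = h
  hval : ∀ i j v w, p i j v w = inner ℝ (x v i) (y w j)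
  hnn : ∀ i j v w, 0 ≤ p i j v w

/-- `p` is a vectorial correlation. -/
def IsVect {n : ℕ} (p : Corr n) : Prop := Nonempty (VectRealization n p)

/-- `f_vect(t)` for the graph `G`: the infimum of `F(p)` over synchronous vectorial
correlations `p` whose marginals of outcome `0` are constantly equal to `t`. -/
noncomputable def fvect {n : ℕ} (G : SimpleGraph (Fin n)) [DecidableRel G.Adj] (t : ℝ) : ℝ :=
  sInf {s | ∃ p : Corr n, IsVect p ∧ IsSync p ∧ HasMarginals p t ∧ s = Fval G p}

open scoped ComplexOrder

/-- A projection matrix: self-adjoint idempotent. -/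
def IsProjMat {d : ℕ} (P : Matrix (Fin d) (Fin d) ℂ) : Prop :=
  P.IsHermitian ∧ P * P = P

/-- `f_q(t)` for the graph `G`: the infimum of `Σ_{(v,w)∈E} Tr(ρ P_v P_w)` over all `d ≥ 1`,
projections `P₁,…,Pₙ ∈ M_d(ℂ)` and positive semidefinite `ρ ∈ M_d(ℂ)` with `Tr(ρ) = 1`,
`ρ P_v = P_v ρ` and `Tr(ρ P_v) = t` for all `v`. -/
noncomputable def fq {n : ℕ} (G : SimpleGraph (Fin n)) [DecidableRel G.Adj] (t : ℝ) : ℝ :=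
  sInf {s | ∃ (d : ℕ), 1 ≤ d ∧
    ∃ (P : Fin n → Matrix (Fin d) (Fin d) ℂ) (ρ : Matrix (Fin d) (Fin d) ℂ),
      (∀ v, IsProjMat (P v)) ∧ ρ.PosSemidef ∧ ρ.trace = 1 ∧
      (∀ v, ρ * P v = P v * ρ) ∧ (∀ v, (ρ * P v).trace = (t : ℂ)) ∧
      (s : ℂ) = ∑ vw ∈ edgeFinset' G, (ρ * P vw.1 * P vw.2).trace}


open scoped ComplexOrder
open Matrix

namespace Matrix.PosSemidef
open scoped MatrixOrder
variable {m 𝕜 : Type*} [Fintype m] [DecidableEq m] [RCLike 𝕜] {A : Matrix m m 𝕜}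

noncomputable def sqrt (_hA : A.PosSemidef) : Matrix m m 𝕜 := CFC.sqrt A

lemma posSemidef_sqrt (hA : A.PosSemidef) : hA.sqrt.PosSemidef :=
  Matrix.nonneg_iff_posSemidef.mp (CFC.sqrt_nonneg A)

lemma sqrt_mul_self (hA : A.PosSemidef) : hA.sqrt * hA.sqrt = A :=
  CFC.sqrt_mul_sqrt_self A hA.nonneg

lemma eq_sqrt_of_sq_eq (hA : A.PosSemidef) {B : Matrix m m 𝕜} (hB : B.PosSemidef)
    (h : A ^ 2 = B) : A = hB.sqrt :=
  ((CFC.sqrt_eq_iff B A hB.nonneg hA.nonneg).mpr (by rw [← h, pow_two])).symm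

end Matrix.PosSemidef

namespace Helper
variable {d : ℕ}

lemma trace_nonneg {A : Matrix (Fin d) (Fin d) ℂ} (hA : A.PosSemidef) : 0 ≤ A.trace := by
  rw [Matrix.trace]
  refine Finset.sum_nonneg fun i _ => ?_
  have := hA.dotProduct_mulVec_nonneg (Pi.single i 1)
  simpa [dotProduct, Matrix.mulVec, Pi.single_apply, Finset.sum_ite_eq] using this

lemma trace_mul_nonneg {A B : Matrix (Fin d) (Fin d) ℂ} (hA : A.PosSemidef)
    (hB : B.PosSemidef) : 0 ≤ (A * B).trace := by
  have h1 : A * B = hA.sqrt * (hA.sqrt * B) := by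
    rw [← mul_assoc, hA.sqrt_mul_self]
  rw [h1, ← Matrix.trace_mul_comm]
  have h2 : (hA.sqrt * B * hA.sqrt).PosSemidef := by
    have := hB.mul_mul_conjTranspose_same hA.sqrt
    rwa [hA.posSemidef_sqrt.1.eq] at this
  exact trace_nonneg h2

lemma nonneg_re_im {z : ℂ} (h : 0 ≤ z) : 0 ≤ z.re ∧ z.im = 0 := by
  rw [Complex.le_def] at h; simpa using ⟨h.1, h.2.symm⟩

lemma sqrt_comm {ρ P : Matrix (Fin d) (Fin d) ℂ} (hρ : ρ.PosSemidef)
    (hP : P.IsHermitian) (hP2 : P * P = P) (hc : ρ * P = P * ρ) :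
    hρ.sqrt * P = P * hρ.sqrt := by
  set σ := hρ.sqrt with hσ
  set U : Matrix (Fin d) (Fin d) ℂ := 1 - P - P with hU
  have hUH : Uᴴ = U := by
    simp [hU, Matrix.conjTranspose_sub, hP.eq]
  have hU2 : U * U = 1 := by
    simp only [hU, sub_mul, mul_sub, one_mul, mul_one, hP2]
    abel
  have hUρ : U * ρ * U = ρ := by
    have h : U * ρ = ρ * U := by
      simp only [hU, sub_mul, mul_sub, one_mul, mul_one, hc]
    rw [h, mul_assoc, hU2, mul_one]
  have hB : (U * σ * U).PosSemidef := by
    have := hρ.posSemidef_sqrt.mul_mul_conjTranspose_same U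
    rwa [hUH] at this
  have hBsq : (U * σ * U) ^ 2 = ρ := by
    rw [pow_two]
    calc U * σ * U * (U * σ * U)
        = U * σ * (U * U) * σ * U := by simp only [mul_assoc]
      _ = U * (σ * σ) * U := by rw [hU2]; simp only [mul_one, mul_assoc]
      _ = ρ := by rw [hσ, hρ.sqrt_mul_self, hUρ]
  have hBeq : U * σ * U = σ := hB.eq_sqrt_of_sq_eq hρ hBsq
  have h1 : U * σ = σ * U := by
    have := congrArg (· * U) hBeq
    simpa only [mul_assoc, hU2, mul_one] using this
  have h5 : (2:ℂ) • (σ * P) = (2:ℂ) • (P * σ) := by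
    have e1 : U * σ = σ - (P * σ + P * σ) := by
      simp only [hU, sub_mul, one_mul, sub_sub, add_mul]
    have e2 : σ * U = σ - (σ * P + σ * P) := by
      simp only [hU, mul_sub, mul_one, sub_sub, mul_add]
    rw [e1, e2] at h1
    have h6 : P * σ + P * σ = σ * P + σ * P := sub_right_inj.mp h1
    rw [two_smul, two_smul]
    exact h6.symm
  exact smul_right_injective (Matrix (Fin d) (Fin d) ℂ) two_ne_zero h5
end Helper

open Matrix
namespace Cliff

variable {n : ℕ}

/-- sign character on `Fin 2`. -/
def χ : Fin 2 → ℂ := fun b => if b = 1 then -1 else 1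

lemma χ_sq (b : Fin 2) : χ b * χ b = 1 := by fin_cases b <;> simp [χ]

lemma χ_star (b : Fin 2) : star (χ b) = χ b := by fin_cases b <;> simp [χ]

lemma χ_succ (b : Fin 2) : χ (b + 1) = -χ b := by fin_cases b <;> simp [χ]

lemma fin2_add_one_add_one (b : Fin 2) : b + 1 + 1 = b := by fin_cases b <;> rfl

lemma fin2_add_one_ne (b : Fin 2) : b + 1 ≠ b := by fin_cases b <;> decide

/-- flip the i-th coordinate -/
def flip (i : Fin n) (x : Fin n → Fin 2) : Fin n → Fin 2 :=
  Function.update x i (x i + 1)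

lemma flip_apply_same (i : Fin n) (x : Fin n → Fin 2) : flip i x i = x i + 1 := by
  simp [flip]

lemma flip_apply_ne (i k : Fin n) (x : Fin n → Fin 2) (h : k ≠ i) : flip i x k = x k := by
  simp [flip, Function.update_apply, h]

lemma flip_flip (i : Fin n) (x : Fin n → Fin 2) : flip i (flip i x) = x := by
  funext k
  by_cases h : k = i
  · subst h
    rw [flip_apply_same, flip_apply_same, fin2_add_one_add_one]
  · rw [flip_apply_ne _ _ _ h, flip_apply_ne _ _ _ h]

lemma flip_ne (i : Fin n) (x : Fin n → Fin 2) : flip i x ≠ x := by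
  intro h
  have := congrFun h i
  rw [flip_apply_same] at this
  exact fin2_add_one_ne (x i) this

lemma flip_eq_comm {i : Fin n} {x y : Fin n → Fin 2} : y = flip i x ↔ x = flip i y := by
  constructor <;> intro h <;> rw [h, flip_flip]

lemma flip_comm (i j : Fin n) (x : Fin n → Fin 2) (h : i ≠ j) :
    flip i (flip j x) = flip j (flip i x) := by
  funext k
  by_cases hi : k = i
  · subst hi
    rw [flip_apply_same, flip_apply_ne j k _ h, flip_apply_ne j k _ h, flip_apply_same]
  · by_cases hj : k = j
    · subst hj
      rw [flip_apply_ne i k _ (Ne.symm h), flip_apply_same, flip_apply_same,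
        flip_apply_ne i k _ (Ne.symm h)]
    · rw [flip_apply_ne i k _ hi, flip_apply_ne j k _ hj, flip_apply_ne j k _ hj,
        flip_apply_ne i k _ hi]

/-- the Jordan-Wigner sign -/
def sgn (i : Fin n) (x : Fin n → Fin 2) : ℂ :=
  ∏ k ∈ Finset.univ.filter (fun k => k < i), χ (x k)

lemma sgn_sq (i : Fin n) (x : Fin n → Fin 2) : sgn i x * sgn i x = 1 := by
  rw [sgn, ← Finset.prod_mul_distrib]
  rw [Finset.prod_congr rfl (fun k _ => χ_sq (x k)), Finset.prod_const_one]

lemma sgn_star (i : Fin n) (x : Fin n → Fin 2) : star (sgn i x) = sgn i x := by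
  rw [sgn, star_prod]
  exact Finset.prod_congr rfl (fun k _ => χ_star (x k))

lemma sgn_flip_of_not_lt (i j : Fin n) (x : Fin n → Fin 2) (h : ¬ i < j) :
    sgn j (flip i x) = sgn j x := by
  refine Finset.prod_congr rfl (fun k hk => ?_)
  rw [Finset.mem_filter] at hk
  have : k ≠ i := fun he => h (he ▸ hk.2)
  rw [flip_apply_ne _ _ _ this]

lemma sgn_flip_of_lt (i j : Fin n) (x : Fin n → Fin 2) (h : i < j) :
    sgn j (flip i x) = -sgn j x := by
  have hi : i ∈ Finset.univ.filter (fun k => k < j) := by simp [h]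
  rw [sgn, sgn, ← Finset.prod_erase_mul _ _ hi, ← Finset.prod_erase_mul _ _ hi]
  have h1 : ∏ k ∈ (Finset.univ.filter (fun k => k < j)).erase i, χ (flip i x k) =
      ∏ k ∈ (Finset.univ.filter (fun k => k < j)).erase i, χ (x k) := by
    refine Finset.prod_congr rfl (fun k hk => ?_)
    rw [flip_apply_ne _ _ _ (Finset.ne_of_mem_erase hk)]
  rw [h1, flip_apply_same, χ_succ]
  ring

/-- the Clifford generators -/
def γ (i : Fin n) : Matrix (Fin n → Fin 2) (Fin n → Fin 2) ℂ :=
  Matrix.of fun x y => if y = flip i x then sgn i x else 0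

lemma γ_apply (i : Fin n) (x y : Fin n → Fin 2) :
    γ i x y = if y = flip i x then sgn i x else 0 := rfl

lemma γ_herm (i : Fin n) : (γ i)ᴴ = γ i := by
  ext x y
  rw [conjTranspose_apply, γ_apply, γ_apply]
  by_cases h : y = flip i x
  · rw [if_pos h, if_pos (flip_eq_comm.mp h), h, sgn_flip_of_not_lt i i x (lt_irrefl i),
      sgn_star]
  · rw [if_neg h, if_neg (fun hc => h (flip_eq_comm.mp hc)), star_zero]

lemma γ_mul_apply (i j : Fin n) (x y : Fin n → Fin 2) :
    (γ i * γ j) x y = sgn i x * γ j (flip i x) y := by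
  rw [mul_apply]
  rw [Finset.sum_eq_single (flip i x)]
  · rw [γ_apply, if_pos rfl]
  · intro z _ hz
    rw [γ_apply, if_neg hz, zero_mul]
  · intro h
    exact absurd (Finset.mem_univ _) h

lemma γ_sq (i : Fin n) : γ i * γ i = 1 := by
  ext x y
  rw [γ_mul_apply, γ_apply, flip_flip, one_apply]
  by_cases h : y = x
  · rw [if_pos h, if_pos h.symm, sgn_flip_of_not_lt i i x (lt_irrefl i), sgn_sq]
  · rw [if_neg h, if_neg (fun hc => h hc.symm), mul_zero]

lemma γ_anticomm {i j : Fin n} (h : i ≠ j) : γ i * γ j = -(γ j * γ i) := by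
  ext x y
  rw [neg_apply, γ_mul_apply, γ_mul_apply, γ_apply, γ_apply]
  rw [flip_comm j i x h.symm]
  by_cases hc : y = flip i (flip j x)
  · rw [if_pos hc, if_pos hc]
    rcases lt_or_gt_of_ne h with hlt | hgt
    · rw [sgn_flip_of_lt i j x hlt, sgn_flip_of_not_lt j i x (not_lt_of_gt hlt)]
      ring
    · rw [sgn_flip_of_not_lt i j x (not_lt_of_gt hgt), sgn_flip_of_lt j i x hgt]
      ring
  · rw [if_neg hc, if_neg hc, mul_zero, mul_zero, neg_zero]

lemma γ_trace (i : Fin n) : (γ i).trace = 0 := by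
  rw [Matrix.trace]
  refine Finset.sum_eq_zero (fun x _ => ?_)
  rw [Matrix.diag_apply, γ_apply, if_neg (fun hc => flip_ne i x hc.symm)]

lemma γ_mul_trace_ne {i j : Fin n} (h : i ≠ j) : (γ i * γ j).trace = 0 := by
  rw [Matrix.trace]
  refine Finset.sum_eq_zero (fun x _ => ?_)
  rw [Matrix.diag_apply, γ_mul_apply, γ_apply]
  have : x ≠ flip j (flip i x) := by
    intro hc
    have := congrFun hc i
    rw [flip_apply_ne j i _ h, flip_apply_same] at this
    exact fin2_add_one_ne (x i) this.symm
  rw [if_neg this, mul_zero]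

end Cliff

namespace Cliff
open Matrix
variable {n : ℕ}

abbrev QT (n : ℕ) := Fin n → Fin 2

noncomputable def Amat (a : Fin n → ℝ) : Matrix (QT n) (QT n) ℂ :=
  ∑ i, ((a i : ℂ)) • γ i

lemma Amat_herm (a : Fin n → ℝ) : (Amat a)ᴴ = Amat a := by
  rw [Amat, conjTranspose_sum]
  refine Finset.sum_congr rfl (fun i _ => ?_)
  rw [conjTranspose_smul, γ_herm, Complex.star_def, Complex.conj_ofReal]

lemma Amat_mul (a a' : Fin n → ℝ) :
    Amat a * Amat a' = ∑ ij : Fin n × Fin n,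
      ((a ij.1 * a' ij.2 : ℝ) : ℂ) • (γ ij.1 * γ ij.2) := by
  rw [Amat, Amat, Finset.sum_mul_sum]
  rw [← Finset.sum_product']
  refine Finset.sum_congr rfl (fun ij _ => ?_)
  rw [Matrix.smul_mul, Matrix.mul_smul, smul_smul]
  push_cast
  rfl

lemma Amat_sq (a : Fin n → ℝ) (h : ∑ i, a i * a i = 1) : Amat a * Amat a = 1 := by
  rw [Amat_mul]
  have hsplit : (Finset.univ : Finset (Fin n × Fin n)) =
      (Finset.univ : Finset (Fin n)).diag ∪ (Finset.univ : Finset (Fin n)).offDiag := by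
    rw [Finset.diag_union_offDiag, Finset.univ_product_univ]
  rw [hsplit, Finset.sum_union (Finset.disjoint_diag_offDiag _)]
  have h1 : ∑ ij ∈ (Finset.univ : Finset (Fin n)).diag,
      ((a ij.1 * a ij.2 : ℝ) : ℂ) • (γ ij.1 * γ ij.2) = 1 := by
    rw [Finset.sum_diag]
    have : ∀ i : Fin n, ((a i * a i : ℝ) : ℂ) • (γ i * γ i)
        = ((a i * a i : ℝ) : ℂ) • (1 : Matrix (QT n) (QT n) ℂ) := by
      intro i; rw [γ_sq]
    rw [Finset.sum_congr rfl (fun i _ => this i), ← Finset.sum_smul]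
    have : ∑ i, ((a i * a i : ℝ) : ℂ) = ((1 : ℝ) : ℂ) := by
      rw [← Complex.ofReal_sum, h]
    rw [this, Complex.ofReal_one, one_smul]
  have h2 : ∑ ij ∈ (Finset.univ : Finset (Fin n)).offDiag,
      ((a ij.1 * a ij.2 : ℝ) : ℂ) • (γ ij.1 * γ ij.2) = 0 := by
    refine Finset.sum_involution (fun ij _ => (ij.2, ij.1)) ?_ ?_ ?_ ?_
    · intro ij hij
      have hne : ij.1 ≠ ij.2 := (Finset.mem_offDiag.mp hij).2.2
      rw [γ_anticomm hne]
      rw [smul_neg]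
      rw [mul_comm (a ij.1)]
      exact neg_add_cancel _
    · intro ij hij _
      intro hc
      have hne : ij.1 ≠ ij.2 := (Finset.mem_offDiag.mp hij).2.2
      have h2 : ij.1 = ij.2 := congrArg Prod.snd hc
      exact hne h2
    · intro ij hij
      have h' := Finset.mem_offDiag.mp hij
      exact Finset.mem_offDiag.mpr ⟨h'.2.1, h'.1, h'.2.2.symm⟩
    · intro ij hij; rfl
  rw [h1, h2, add_zero]

lemma Amat_trace (a : Fin n → ℝ) : (Amat a).trace = 0 := by
  rw [Amat, trace_sum]
  refine Finset.sum_eq_zero (fun i _ => ?_)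
  rw [trace_smul, γ_trace, smul_zero]

lemma Amat_mul_trace (a a' : Fin n → ℝ) :
    (Amat a * Amat a').trace
      = ((∑ i, a i * a' i : ℝ) : ℂ) * (Fintype.card (QT n) : ℂ) := by
  rw [Amat_mul, trace_sum]
  have : ∀ ij : Fin n × Fin n, (((a ij.1 * a' ij.2 : ℝ) : ℂ) • (γ ij.1 * γ ij.2)).trace
      = if ij.2 = ij.1 then ((a ij.1 * a' ij.2 : ℝ) : ℂ) * (Fintype.card (QT n) : ℂ) else 0 := by
    intro ij
    rw [trace_smul]
    by_cases h : ij.2 = ij.1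
    · rw [if_pos h, h, γ_sq, trace_one, smul_eq_mul]
    · rw [if_neg h, γ_mul_trace_ne (fun hc => h hc.symm), smul_zero]
  rw [Finset.sum_congr rfl (fun ij _ => this ij)]
  rw [Fintype.sum_prod_type]
  simp only [Finset.sum_ite_eq', Finset.mem_univ, if_true]
  rw [← Finset.sum_mul, ← Complex.ofReal_sum]

end Cliff

namespace Cliff
open Matrix
open scoped ComplexOrder
variable {n : ℕ}

/-- the quantum data built from a PSD real matrix with unit diagonal -/
noncomputable def Pm (C : Matrix (Fin n) (Fin n) ℝ) (hC : C.PosSemidef) (v : Fin n) :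
    Matrix (QT n) (QT n) ℂ :=
  (((1:ℝ)/2 : ℝ) : ℂ) • (1 + Amat (fun i => hC.sqrt i v))

noncomputable def ρm (n : ℕ) : Matrix (QT n) (QT n) ℂ :=
  ((((Fintype.card (QT n) : ℝ))⁻¹ : ℝ) : ℂ) • 1

variable {C : Matrix (Fin n) (Fin n) ℝ} (hC : C.PosSemidef) (hCd : ∀ v, C v v = 1)

lemma sqrt_col (v w : Fin n) : ∑ i, hC.sqrt i v * hC.sqrt i w = C v w := by
  have hsym : ∀ i j, hC.sqrt i j = hC.sqrt j i := by
    intro i j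
    have h := hC.posSemidef_sqrt.1
    have := congrFun (congrFun h i) j
    rw [Matrix.conjTranspose_apply] at this
    simpa using this.symm
  have hmul := hC.sqrt_mul_self
  have := congrFun (congrFun hmul v) w
  rw [Matrix.mul_apply] at this
  rw [← this]
  exact Finset.sum_congr rfl (fun i _ => by rw [hsym i v])

lemma card_QT_pos : 0 < Fintype.card (QT n) := Fintype.card_pos

lemma Pm_herm (v : Fin n) : (Pm C hC v)ᴴ = Pm C hC v := by
  rw [Pm, conjTranspose_smul, conjTranspose_add, conjTranspose_one, Amat_herm,
    Complex.star_def, Complex.conj_ofReal]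

lemma Pm_proj (hCd : ∀ v, C v v = 1) (v : Fin n) : Pm C hC v * Pm C hC v = Pm C hC v := by
  have hA : Amat (fun i => hC.sqrt i v) * Amat (fun i => hC.sqrt i v) = 1 := by
    refine Amat_sq _ ?_
    rw [sqrt_col hC v v, hCd v]
  rw [Pm, Matrix.smul_mul, Matrix.mul_smul, smul_smul]
  have hexp : (1 + Amat (fun i => hC.sqrt i v)) * (1 + Amat (fun i => hC.sqrt i v))
      = (2:ℂ) • (1 + Amat (fun i => hC.sqrt i v)) := by
    simp only [add_mul, mul_add, one_mul, mul_one]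
    rw [hA, two_smul]
    abel
  rw [hexp, smul_smul]
  norm_num

lemma Amat_tr (v : Fin n) : (Amat (fun i => hC.sqrt i v)).trace = 0 := Amat_trace _

lemma Pm_trace (v : Fin n) : (Pm C hC v).trace
    = (((1:ℝ)/2 : ℝ) : ℂ) * (Fintype.card (QT n) : ℂ) := by
  rw [Pm, trace_smul, trace_add, trace_one, Amat_tr, add_zero, smul_eq_mul]

lemma Pm_mul_trace (v w : Fin n) : (Pm C hC v * Pm C hC w).trace
    = (Fintype.card (QT n) : ℂ) * (((1 + C v w)/4 : ℝ) : ℂ) := by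
  set Av := Amat (fun i => hC.sqrt i v)
  set Aw := Amat (fun i => hC.sqrt i w)
  have hAA : (Av * Aw).trace = ((C v w : ℝ) : ℂ) * (Fintype.card (QT n) : ℂ) := by
    rw [Amat_mul_trace, sqrt_col hC v w]
  rw [Pm, Pm, Matrix.smul_mul, Matrix.mul_smul, smul_smul, trace_smul]
  have hexp : ((1 : Matrix (QT n) (QT n) ℂ) + Av) * (1 + Aw) = 1 + Aw + Av + Av * Aw := by
    simp only [add_mul, mul_add, one_mul, mul_one]
    abel
  rw [hexp, trace_add, trace_add, trace_add, trace_one, Amat_tr, Amat_tr, hAA,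
    add_zero, add_zero, smul_eq_mul]
  push_cast
  ring

lemma ρm_psd : (ρm n).PosSemidef := by
  refine Matrix.PosSemidef.of_dotProduct_mulVec_nonneg ?_ ?_
  · show _ᴴ = _
    rw [ρm, conjTranspose_smul, conjTranspose_one, Complex.star_def, Complex.conj_ofReal]
  · intro z
    rw [ρm, Matrix.smul_mulVec, Matrix.one_mulVec, dotProduct_smul]
    refine smul_nonneg ?_ (dotProduct_star_self_nonneg z)
    rw [Complex.zero_le_real]
    positivity

lemma ρm_trace : (ρm n).trace = 1 := by
  rw [ρm, trace_smul, trace_one, smul_eq_mul]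
  have h : ((Fintype.card (QT n) : ℝ)) ≠ 0 :=
    ne_of_gt (by exact_mod_cast card_QT_pos)
  push_cast
  field_simp

lemma ρm_comm (M : Matrix (QT n) (QT n) ℂ) : ρm n * M = M * ρm n := by
  rw [ρm, Matrix.smul_mul, Matrix.mul_smul, one_mul, mul_one]

lemma ρm_mul_trace (M : Matrix (QT n) (QT n) ℂ) :
    (ρm n * M).trace = ((((Fintype.card (QT n) : ℝ))⁻¹ : ℝ) : ℂ) * M.trace := by
  rw [ρm, Matrix.smul_mul, one_mul, trace_smul, smul_eq_mul]

end Cliff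

open scoped ComplexOrder
open Matrix Helper

section PartA
variable {n d : ℕ} (G : SimpleGraph (Fin n)) [DecidableRel G.Adj]

noncomputable def emb (d : ℕ) (M : Matrix (Fin d) (Fin d) ℂ) :
    EuclideanSpace ℂ (Fin d × Fin d) :=
  (WithLp.equiv 2 _).symm fun pr => M pr.1 pr.2

lemma emb_add {d : ℕ} (A B : Matrix (Fin d) (Fin d) ℂ) :
    emb d (A + B) = emb d A + emb d B := rfl

lemma inner_emb {d : ℕ} (A B : Matrix (Fin d) (Fin d) ℂ) :
    (inner ℂ (emb d A) (emb d B) : ℂ) = (Aᴴ * B).trace := by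
  rw [PiLp.inner_apply]
  simp only [RCLike.inner_apply]
  rw [Matrix.trace]
  simp only [Matrix.diag_apply, Matrix.mul_apply, Matrix.conjTranspose_apply]
  rw [Fintype.sum_prod_type]
  rw [Finset.sum_comm]
  exact Finset.sum_congr rfl fun _ _ => Finset.sum_congr rfl fun _ _ => mul_comm _ _

lemma q_to_vect {s : ℝ} (hd : 1 ≤ d) (P : Fin n → Matrix (Fin d) (Fin d) ℂ)
    (ρ : Matrix (Fin d) (Fin d) ℂ) (hP : ∀ v, IsProjMat (P v)) (hρ : ρ.PosSemidef)
    (htr : ρ.trace = 1) (hcomm : ∀ v, ρ * P v = P v * ρ)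
    (hmarg : ∀ v, (ρ * P v).trace = ((1/2 : ℝ) : ℂ))
    (hs : (s : ℂ) = ∑ vw ∈ edgeFinset' G, (ρ * P vw.1 * P vw.2).trace) :
    ∃ p : Corr n, IsVect p ∧ IsSync p ∧ HasMarginals p (1/2) ∧ s = Fval G p := by
  classical
  set σ := hρ.sqrt with hσdef
  have hσH : σᴴ = σ := hρ.posSemidef_sqrt.1
  have hσσ : σ * σ = ρ := hρ.sqrt_mul_self
  set Q : Fin n → Fin 2 → Matrix (Fin d) (Fin d) ℂ :=
    fun v i => if i = 0 then P v else 1 - P v with hQdef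
  have e0 : ∀ v, Q v 0 = P v := fun v => if_pos rfl
  have e1 : ∀ v, Q v 1 = 1 - P v := fun v => if_neg (by decide)
  have hQH : ∀ v i, (Q v i)ᴴ = Q v i := by
    intro v i
    match i with
    | 0 => rw [e0]; exact (hP v).1
    | 1 => rw [e1, Matrix.conjTranspose_sub, Matrix.conjTranspose_one, (hP v).1]
  have hQ01 : ∀ v, Q v 0 * Q v 1 = 0 := by
    intro v; rw [e0, e1, mul_sub, mul_one, (hP v).2, sub_self]
  have hQ10 : ∀ v, Q v 1 * Q v 0 = 0 := by
    intro v; rw [e0, e1, sub_mul, one_mul, (hP v).2, sub_self]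
  have hQmul : ∀ v i, Q v i * Q v i = Q v i := by
    intro v i
    match i with
    | 0 => rw [e0]; exact (hP v).2
    | 1 =>
      rw [e1]
      simp only [sub_mul, mul_sub, one_mul, mul_one, (hP v).2]
      abel
  have hQPSD : ∀ v i, (Q v i).PosSemidef := by
    intro v i
    have h : Q v i = (Q v i)ᴴ * Q v i := by rw [hQH, hQmul]
    rw [h]
    exact Matrix.posSemidef_conjTranspose_mul_self _
  have hQsum : ∀ v, Q v 0 + Q v 1 = 1 := by
    intro v; rw [e0, e1]; abel
  have hσP : ∀ v i, σ * Q v i = Q v i * σ := by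
    intro v i
    have h0 : σ * P v = P v * σ := sqrt_comm hρ (hP v).1 (hP v).2 (hcomm v)
    match i with
    | 0 => rw [e0]; exact h0
    | 1 => rw [e1, mul_sub, sub_mul, mul_one, one_mul, h0]
  have hρQ : ∀ v i, ρ * Q v i = Q v i * ρ := by
    intro v i
    match i with
    | 0 => rw [e0]; exact hcomm v
    | 1 => rw [e1, mul_sub, sub_mul, mul_one, one_mul, hcomm v]
  set p : Corr n := fun i j v w => ((ρ * Q v i * Q w j).trace).re with hpdef
  have key : ∀ i j (v w : Fin n),
      ((Q v i * σ)ᴴ * (σ * Q w j)) = ρ * Q v i * Q w j := by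
    intro i j v w
    rw [Matrix.conjTranspose_mul, hσH, hQH]
    rw [hσP v i, mul_assoc (Q v i) σ (σ * Q w j), ← mul_assoc σ σ (Q w j), hσσ,
      ← mul_assoc, ← hρQ]
  have hnnc : ∀ i j (v w : Fin n), 0 ≤ (ρ * Q v i * Q w j).trace := by
    intro i j v w
    have hps : (σ * Q v i * σ).PosSemidef := by
      have h := (hQPSD v i).conjTranspose_mul_mul_same σ
      rwa [hσH] at h
    have e2 : σ * Q v i * σ = ρ * Q v i := by
      rw [hσP v i, mul_assoc, hσσ, ← hρQ]
    rw [← e2]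
    exact trace_mul_nonneg hps (hQPSD w j)
  refine ⟨p, ?_, ?_, ?_, ?_⟩
  · -- IsVect
    refine ⟨{ H := EuclideanSpace ℂ (Fin d × Fin d)
              nacg := inferInstance
              ips := InnerProductSpace.complexToReal
              x := fun v i => emb d (Q v i * σ)
              y := fun w j => emb d (σ * Q w j)
              h := emb d σ
              hnorm := ?_
              hxorth := ?_
              hyorth := ?_
              hxsum := ?_
              hysum := ?_
              hval := ?_
              hnn := fun i j v w => (nonneg_re_im (hnnc i j v w)).1 }⟩
    · -- norm
      have h1 : (inner ℂ (emb d σ) (emb d σ) : ℂ) = 1 := by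
        rw [inner_emb, hσH, hσσ, htr]
      have h3 : ‖emb d σ‖ ^ 2 = 1 := by
        rw [norm_sq_eq_re_inner (𝕜 := ℂ), h1]; norm_num
      rw [← Real.sqrt_sq (norm_nonneg _), h3, Real.sqrt_one]
    · intro v
      show (inner ℂ (emb d (Q v 0 * σ)) (emb d (Q v 1 * σ)) : ℂ).re = 0
      have h : (inner ℂ (emb d (Q v 0 * σ)) (emb d (Q v 1 * σ)) : ℂ) = 0 := by
        rw [inner_emb, Matrix.conjTranspose_mul, hσH, hQH]
        rw [mul_assoc σ (Q v 0), ← mul_assoc (Q v 0), hQ01, Matrix.zero_mul,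
          Matrix.mul_zero, Matrix.trace_zero]
      rw [h]; rfl
    · intro w
      show (inner ℂ (emb d (σ * Q w 0)) (emb d (σ * Q w 1)) : ℂ).re = 0
      have h : (inner ℂ (emb d (σ * Q w 0)) (emb d (σ * Q w 1)) : ℂ) = 0 := by
        rw [inner_emb, Matrix.conjTranspose_mul, hσH, hQH]
        rw [mul_assoc (Q w 0) σ, ← mul_assoc σ σ, hσσ, ← mul_assoc, ← hρQ w 0, mul_assoc,
          hQ01, Matrix.mul_zero, Matrix.trace_zero]
      rw [h]; rfl
    · intro v
      rw [← emb_add, ← Matrix.add_mul, hQsum, one_mul]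
    · intro w
      rw [← emb_add, ← Matrix.mul_add, hQsum, mul_one]
    · intro i j v w
      show p i j v w = (inner ℂ (emb d (Q v i * σ)) (emb d (σ * Q w j)) : ℂ).re
      rw [inner_emb, key]
  · -- IsSync
    intro v
    constructor
    · show ((ρ * Q v 0 * Q v 1).trace).re = 0
      rw [mul_assoc, hQ01, Matrix.mul_zero, Matrix.trace_zero]; rfl
    · show ((ρ * Q v 1 * Q v 0).trace).re = 0
      rw [mul_assoc, hQ10, Matrix.mul_zero, Matrix.trace_zero]; rfl
  · -- marginals
    constructor
    · intro v w
      have e : ∑ j : Fin 2, p 0 j v w = ((ρ * Q v 0 * (Q w 0 + Q w 1)).trace).re := by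
        rw [Matrix.mul_add, Matrix.trace_add, Fin.sum_univ_two]
        rfl
      rw [e, hQsum, mul_one, e0, hmarg v]
      norm_num
    · intro v w
      have e : ∑ i : Fin 2, p i 0 v w = ((ρ * (Q v 0 + Q v 1) * Q w 0).trace).re := by
        rw [Matrix.mul_add, Matrix.add_mul, Matrix.trace_add, Fin.sum_univ_two]
        rfl
      rw [e, hQsum, mul_one, e0, hmarg w]
      norm_num
  · -- Fval
    have e : Fval G p = (∑ vw ∈ edgeFinset' G, (ρ * P vw.1 * P vw.2).trace).re := by
      rw [Fval, Complex.re_sum]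
      refine Finset.sum_congr rfl fun vw _ => ?_
      show ((ρ * Q vw.1 0 * Q vw.2 0).trace).re = _
      rw [e0, e0]
    rw [e, ← hs, Complex.ofReal_re]
end PartA

section PartB1

lemma vect_gram {n : ℕ} (p : Corr n) (hv : IsVect p) (hsync : IsSync p)
    (hm : HasMarginals p (1/2)) :
    ∃ C : Matrix (Fin n) (Fin n) ℝ, C.PosSemidef ∧ (∀ v, C v v = 1) ∧
      ∀ v w, p 0 0 v w = (1 + C v w)/4 := by
  obtain ⟨R⟩ := hv
  letI := R.nacg
  letI := R.ips
  -- basic inner product facts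
  have f3 : (inner ℝ R.h R.h : ℝ) = 1 := by
    rw [real_inner_self_eq_norm_mul_norm, R.hnorm, mul_one]
  have f1 : ∀ v, (inner ℝ (R.x v 0) R.h : ℝ) = 1/2 := by
    intro v
    have := hm.1 v v
    rw [Fin.sum_univ_two, R.hval 0 0 v v, R.hval 0 1 v v, ← inner_add_right, R.hysum v] at this
    exact this
  have f2 : ∀ w, (inner ℝ R.h (R.y w 0) : ℝ) = 1/2 := by
    intro w
    have := hm.2 w w
    rw [Fin.sum_univ_two, R.hval 0 0 w w, R.hval 1 0 w w, ← inner_add_left, R.hxsum w] at this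
    exact this
  have f4 : ∀ v, (inner ℝ (R.x v 0) (R.x v 0) : ℝ) = 1/2 := by
    intro v
    have h1 := f1 v
    rw [← R.hxsum v, inner_add_right, R.hxorth v, add_zero] at h1
    exact h1
  have f5 : ∀ w, (inner ℝ (R.y w 0) (R.y w 0) : ℝ) = 1/2 := by
    intro w
    have h1 := f2 w
    rw [← R.hysum w, inner_add_left, real_inner_comm (R.y w 0) (R.y w 1), R.hyorth w,
      add_zero] at h1
    exact h1
  have f6 : ∀ v, (inner ℝ (R.x v 0) (R.y v 0) : ℝ) = 1/2 := by
    intro v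
    have h1 := f1 v
    rw [← R.hysum v, inner_add_right] at h1
    have h2 : (inner ℝ (R.x v 0) (R.y v 1) : ℝ) = 0 := by
      rw [← R.hval 0 1 v v]
      exact (hsync v).1
    rw [h2, add_zero] at h1
    exact h1
  have f7 : ∀ v, R.x v 0 = R.y v 0 := by
    intro v
    have h1 : (inner ℝ (R.x v 0 - R.y v 0) (R.x v 0 - R.y v 0) : ℝ) = 0 := by
      rw [inner_sub_sub_self]
      rw [f4 v, f5 v, f6 v, real_inner_comm (R.x v 0) (R.y v 0), f6 v]
      ring
    have h2 := inner_self_eq_zero.mp h1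
    exact sub_eq_zero.mp h2
  have f8 : ∀ v, (inner ℝ R.h (R.x v 0) : ℝ) = 1/2 := by
    intro v
    rw [f7 v]; exact f2 v
  -- the unit vectors
  set u : Fin n → R.H := fun v => (2:ℝ) • R.x v 0 - R.h with hu
  have hinner : ∀ v w, (inner ℝ (u v) (u w) : ℝ)
      = 4 * (inner ℝ (R.x v 0) (R.x w 0) : ℝ) - 1 := by
    intro v w
    rw [hu]
    simp only [inner_sub_left, inner_sub_right, real_inner_smul_left, real_inner_smul_right]
    rw [f1 v, f8 w, f3]
    ring
  have hp00 : ∀ v w, p 0 0 v w = (inner ℝ (R.x v 0) (R.x w 0) : ℝ) := by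
    intro v w
    rw [R.hval 0 0 v w, f7 w]
  refine ⟨Matrix.of (fun v w => (inner ℝ (u v) (u w) : ℝ)), Matrix.PosSemidef.of_dotProduct_mulVec_nonneg ?_ ?_, ?_, ?_⟩
  · -- hermitian
    ext v w
    rw [Matrix.conjTranspose_apply]
    show star (inner ℝ (u w) (u v) : ℝ) = _
    rw [star_trivial]
    exact real_inner_comm _ _
  · -- quadratic form
    intro z
    have hz : star z = z := by
      funext v; exact star_trivial _
    rw [hz]
    have hdot : dotProduct z ((Matrix.of fun v w => (inner ℝ (u v) (u w) : ℝ)) *ᵥ z)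
        = (inner ℝ (∑ v, z v • u v) (∑ w, z w • u w) : ℝ) := by
      rw [sum_inner, dotProduct]
      refine Finset.sum_congr rfl (fun v _ => ?_)
      rw [real_inner_smul_left, inner_sum, Matrix.mulVec]
      congr 1
      rw [dotProduct]
      refine Finset.sum_congr rfl (fun w _ => ?_)
      rw [real_inner_smul_right]
      show (inner ℝ (u v) (u w) : ℝ) * z w = _
      ring
    rw [hdot]
    exact real_inner_self_nonneg
  · intro v
    show (inner ℝ (u v) (u v) : ℝ) = 1
    rw [hinner v v, f4 v]
    ring
  · intro v w
    show p 0 0 v w = (1 + (inner ℝ (u v) (u w) : ℝ))/4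
    rw [hinner v w, hp00 v w]
    ring
end PartB1

section PartB2
open Matrix
open scoped ComplexOrder

lemma trace_submatrix_equiv' {D : ℕ} {m : Type*} [Fintype m] [DecidableEq m]
    (e : Fin D ≃ m) (M : Matrix m m ℂ) : (M.submatrix e e).trace = M.trace := by
  rw [Matrix.trace, Matrix.trace]
  exact Equiv.sum_comp e (fun z => M z z)

lemma vect_to_q {n : ℕ} (G : SimpleGraph (Fin n)) [DecidableRel G.Adj] {s : ℝ}
    (p : Corr n) (hv : IsVect p) (hsync : IsSync p) (hm : HasMarginals p (1/2))
    (hsF : s = Fval G p) :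
    ∃ (d : ℕ), 1 ≤ d ∧
    ∃ (P : Fin n → Matrix (Fin d) (Fin d) ℂ) (ρ : Matrix (Fin d) (Fin d) ℂ),
      (∀ v, IsProjMat (P v)) ∧ ρ.PosSemidef ∧ ρ.trace = 1 ∧
      (∀ v, ρ * P v = P v * ρ) ∧ (∀ v, (ρ * P v).trace = (((1:ℝ)/2 : ℝ) : ℂ)) ∧
      ((s : ℝ) : ℂ) = ∑ vw ∈ edgeFinset' G, (ρ * P vw.1 * P vw.2).trace := by
  classical
  obtain ⟨C, hC, hCd, hCp⟩ := vect_gram p hv hsync hm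
  set D := Fintype.card (Cliff.QT n) with hD
  have hD1 : 1 ≤ D := Cliff.card_QT_pos
  have hDR : ((D:ℝ)) ≠ 0 := ne_of_gt (by exact_mod_cast Cliff.card_QT_pos)
  set e : Fin D ≃ Cliff.QT n := (Fintype.equivFin (Cliff.QT n)).symm with he
  set Φ : Matrix (Cliff.QT n) (Cliff.QT n) ℂ → Matrix (Fin D) (Fin D) ℂ :=
    fun M => M.submatrix e e with hΦ
  have hmul : ∀ M N, Φ M * Φ N = Φ (M * N) := by
    intro M N
    exact Matrix.submatrix_mul_equiv M N ⇑e e ⇑e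
  have htrace : ∀ M, (Φ M).trace = M.trace := fun M => trace_submatrix_equiv' e M
  refine ⟨D, hD1, fun v => Φ (Cliff.Pm C hC v), Φ (Cliff.ρm n), ?_, ?_, ?_, ?_, ?_, ?_⟩
  · intro v
    constructor
    · show _ᴴ = _
      rw [hΦ, Matrix.conjTranspose_submatrix, Cliff.Pm_herm]
    · rw [hmul, Cliff.Pm_proj hC hCd v]
  · exact Cliff.ρm_psd.submatrix ⇑e
  · rw [htrace, Cliff.ρm_trace]
  · intro v
    rw [hmul, hmul, Cliff.ρm_comm]
  · intro v
    rw [hmul, htrace, Cliff.ρm_mul_trace, Cliff.Pm_trace]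
    push_cast
    field_simp
  · have hterm : ∀ v w : Fin n,
        (Φ (Cliff.ρm n) * Φ (Cliff.Pm C hC v) * Φ (Cliff.Pm C hC w)).trace
          = ((p 0 0 v w : ℝ) : ℂ) := by
      intro v w
      rw [hmul, hmul, htrace, mul_assoc, Cliff.ρm_mul_trace, Cliff.Pm_mul_trace hC]
      rw [hCp v w]
      push_cast
      field_simp
    rw [Finset.sum_congr rfl (fun vw _ => hterm vw.1 vw.2)]
    rw [hsF, Fval]
    push_cast
    rfl
end PartB2

theorem stmt8 {n : ℕ} (hn : 1 ≤ n) (G : SimpleGraph (Fin n)) [DecidableRel G.Adj] :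
    fq G (1 / 2) = fvect G (1 / 2) := by
  unfold fq fvect
  congr 1
  ext s
  simp only [Set.mem_setOf_eq]
  constructor
  · rintro ⟨d, hd, P, ρ, hP, hρ, htr, hcomm, hmarg, hs⟩
    exact q_to_vect G hd P ρ hP hρ htr hcomm hmarg hs
  · rintro ⟨p, hv, hsync, hm, hsF⟩
    exact vect_to_q G p hv hsync hm hsF
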